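/- Let φ : (0,∞) → ℝ be C³ with |x·φ'''(x)/φ''(x)| ≤ k₃ for all x > 0. Then for every integer l ≤ 0, |φ''(1)|·2^(k₃(l−1)) ≤ sup_{1/2 ≤ r ≤ 2} |φ''(2^(−l) r)| ≤ |φ''(1)|·2^(−k₃(l−1)). -/
import Mathlib

open Real Set

theorem key_log (φ'' φ''' : ℝ → ℝ) (k₃ : ℝ)
    (hd3 : ∀ x ∈ Ioi (0:ℝ), HasDerivAt φ'' (φ''' x) x)
    (hne : ∀ x ∈ Ioi (0:ℝ), φ'' x ≠ 0)
    (hb : ∀ x ∈ Ioi (0:ℝ), |x * φ''' x| ≤ k₃ * |φ'' x|) :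
    ∀ x : ℝ, 0 < x → |Real.log (φ'' x) - Real.log (φ'' 1)| ≤ k₃ * |Real.log x| := by
  intro x hx
  set G : ℝ → ℝ := fun t => Real.log (φ'' (Real.exp t)) with hGdef
  set G' : ℝ → ℝ := fun t => Real.exp t * φ''' (Real.exp t) / φ'' (Real.exp t) with hG'def
  have hG : ∀ t : ℝ, HasDerivAt G (G' t) t := by
    intro t
    have h1 : HasDerivAt (fun t => φ'' (Real.exp t)) (φ''' (Real.exp t) * Real.exp t) t :=
      (hd3 _ (Real.exp_pos t)).comp t (Real.hasDerivAt_exp t)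
    have h2 := h1.log (hne _ (Real.exp_pos t))
    convert h2 using 1
    simp [hG'def]; ring
  have hbound : ∀ t : ℝ, ‖G' t‖ ≤ k₃ := by
    intro t
    have h1 := hb _ (Real.exp_pos t)
    have h2 : φ'' (Real.exp t) ≠ 0 := hne _ (Real.exp_pos t)
    rw [Real.norm_eq_abs, hG'def]
    rw [abs_div, div_le_iff₀ (abs_pos.mpr h2)]
    exact h1
  have h := Convex.norm_image_sub_le_of_norm_hasDerivWithin_le
    (f := G) (f' := G') (fun t _ => (hG t).hasDerivWithinAt) (fun t _ => hbound t)
    convex_univ (mem_univ (0:ℝ)) (mem_univ (Real.log x))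
  simpa [hGdef, Real.exp_log hx] using h

theorem key_bound (φ'' φ''' : ℝ → ℝ) (k₃ : ℝ)
    (hd3 : ∀ x ∈ Ioi (0:ℝ), HasDerivAt φ'' (φ''' x) x)
    (hne : ∀ x ∈ Ioi (0:ℝ), φ'' x ≠ 0)
    (hb : ∀ x ∈ Ioi (0:ℝ), |x * φ''' x| ≤ k₃ * |φ'' x|) :
    ∀ x : ℝ, 0 < x →
      |φ'' 1| * Real.exp (-(k₃ * |Real.log x|)) ≤ |φ'' x| ∧
      |φ'' x| ≤ |φ'' 1| * Real.exp (k₃ * |Real.log x|) := by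
  intro x hx
  have h := key_log φ'' φ''' k₃ hd3 hne hb x hx
  have h1 : φ'' x ≠ 0 := hne x hx
  have h2 : φ'' 1 ≠ 0 := hne 1 (Set.mem_Ioi.mpr one_pos)
  have e1 : |φ'' x| = Real.exp (Real.log (φ'' x)) := by
    rw [← Real.log_abs, Real.exp_log (abs_pos.mpr h1)]
  have e2 : |φ'' 1| = Real.exp (Real.log (φ'' 1)) := by
    rw [← Real.log_abs, Real.exp_log (abs_pos.mpr h2)]
  rw [abs_le] at h
  constructor
  · rw [e1, e2, ← Real.exp_add]
    exact Real.exp_le_exp.mpr (by linarith [h.1])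
  · rw [e1, e2, ← Real.exp_add]
    exact Real.exp_le_exp.mpr (by linarith [h.2])

theorem stmt_1 (φ φ' φ'' φ''' : ℝ → ℝ) (k₃ : ℝ) (hk₃ : 0 < k₃)
    (hd1 : ∀ x ∈ Ioi (0:ℝ), HasDerivAt φ (φ' x) x)
    (hd2 : ∀ x ∈ Ioi (0:ℝ), HasDerivAt φ' (φ'' x) x)
    (hd3 : ∀ x ∈ Ioi (0:ℝ), HasDerivAt φ'' (φ''' x) x)
    (hcont : ContinuousOn φ''' (Ioi 0))
    (hne : ∀ x ∈ Ioi (0:ℝ), φ'' x ≠ 0)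
    (hb : ∀ x ∈ Ioi (0:ℝ), |x * φ''' x| ≤ k₃ * |φ'' x|) :
    ∀ l : ℤ, l ≤ 0 →
      |φ'' 1| * (2:ℝ) ^ (k₃ * ((l:ℝ) - 1)) ≤
        sSup ((fun r : ℝ => |φ'' ((2:ℝ) ^ (-l) * r)|) '' Icc (1/2) 2) ∧
      sSup ((fun r : ℝ => |φ'' ((2:ℝ) ^ (-l) * r)|) '' Icc (1/2) 2) ≤
        |φ'' 1| * (2:ℝ) ^ (-(k₃ * ((l:ℝ) - 1))) := by
  intro l hl
  have hlr : (l:ℝ) ≤ 0 := by exact_mod_cast hl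
  have hpow : (0:ℝ) < (2:ℝ) ^ (-l) := zpow_pos (by norm_num) _
  -- rpow values as exp
  have hrw1 : (2:ℝ) ^ (-(k₃ * ((l:ℝ) - 1))) = Real.exp (k₃ * ((1 - (l:ℝ)) * Real.log 2)) := by
    rw [Real.rpow_def_of_pos (by norm_num)]
    ring_nf
  have hrw2 : (2:ℝ) ^ (k₃ * ((l:ℝ) - 1)) = Real.exp (-(k₃ * ((1 - (l:ℝ)) * Real.log 2))) := by
    rw [Real.rpow_def_of_pos (by norm_num)]
    ring_nf
  have hlog2 : (0:ℝ) ≤ Real.log 2 := Real.log_nonneg (by norm_num)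
  -- for each r in Icc, the point is positive and |log x| ≤ (1-l) log 2
  have hmem : ∀ r ∈ Icc (1/2 : ℝ) 2, (0:ℝ) < (2:ℝ) ^ (-l) * r := by
    intro r hr
    exact mul_pos hpow (lt_of_lt_of_le (by norm_num) hr.1)
  have hlogb : ∀ r ∈ Icc (1/2 : ℝ) 2,
      |Real.log ((2:ℝ) ^ (-l) * r)| ≤ (1 - (l:ℝ)) * Real.log 2 := by
    intro r hr
    have hrpos : (0:ℝ) < r := lt_of_lt_of_le (by norm_num) hr.1
    have hlogr : |Real.log r| ≤ Real.log 2 := by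
      rw [abs_le]
      constructor
      · have := Real.log_le_log (by norm_num : (0:ℝ) < 1/2) hr.1
        rw [show (1/2 : ℝ) = 2⁻¹ by norm_num, Real.log_inv] at this
        linarith
      · exact Real.log_le_log hrpos hr.2
    have hlogp : Real.log ((2:ℝ) ^ (-l)) = (-l : ℤ) * Real.log 2 := Real.log_zpow _ _
    calc |Real.log ((2:ℝ) ^ (-l) * r)|
        = |Real.log ((2:ℝ) ^ (-l)) + Real.log r| := by
          rw [Real.log_mul (ne_of_gt hpow) (ne_of_gt hrpos)]
      _ ≤ |Real.log ((2:ℝ) ^ (-l))| + |Real.log r| := abs_add_le _ _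
      _ ≤ (-(l:ℝ)) * Real.log 2 + Real.log 2 := by
          rw [hlogp]
          push_cast
          rw [abs_of_nonneg (by nlinarith)]
          linarith
      _ = (1 - (l:ℝ)) * Real.log 2 := by ring
  have hub : ∀ y ∈ ((fun r : ℝ => |φ'' ((2:ℝ) ^ (-l) * r)|) '' Icc (1/2) 2),
      y ≤ |φ'' 1| * (2:ℝ) ^ (-(k₃ * ((l:ℝ) - 1))) := by
    rintro y ⟨r, hr, rfl⟩
    have hx := hmem r hr
    have hB := (key_bound φ'' φ''' k₃ hd3 hne hb _ hx).2
    have hmono : Real.exp (k₃ * |Real.log ((2:ℝ) ^ (-l) * r)|) ≤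
        Real.exp (k₃ * ((1 - (l:ℝ)) * Real.log 2)) :=
      Real.exp_le_exp.mpr (mul_le_mul_of_nonneg_left (hlogb r hr) (le_of_lt hk₃))
    rw [hrw1]
    calc |φ'' ((2:ℝ) ^ (-l) * r)| ≤ |φ'' 1| * Real.exp (k₃ * |Real.log ((2:ℝ) ^ (-l) * r)|) := hB
      _ ≤ |φ'' 1| * Real.exp (k₃ * ((1 - (l:ℝ)) * Real.log 2)) :=
          mul_le_mul_of_nonneg_left hmono (abs_nonneg _)
  have hne' : ((fun r : ℝ => |φ'' ((2:ℝ) ^ (-l) * r)|) '' Icc (1/2) 2).Nonempty :=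
    ⟨_, ⟨1, by norm_num, rfl⟩⟩
  have hbdd : BddAbove ((fun r : ℝ => |φ'' ((2:ℝ) ^ (-l) * r)|) '' Icc (1/2) 2) :=
    ⟨_, fun y hy => hub y hy⟩
  constructor
  · -- lower bound: value at r = 1
    have hmem1 : |φ'' ((2:ℝ) ^ (-l) * 1)| ∈
        ((fun r : ℝ => |φ'' ((2:ℝ) ^ (-l) * r)|) '' Icc (1/2) 2) := ⟨1, by norm_num, rfl⟩
    have hle := le_csSup hbdd hmem1
    have hx := hmem 1 (by norm_num)
    have hB := (key_bound φ'' φ''' k₃ hd3 hne hb _ hx).1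
    have hmono : Real.exp (-(k₃ * ((1 - (l:ℝ)) * Real.log 2))) ≤
        Real.exp (-(k₃ * |Real.log ((2:ℝ) ^ (-l) * 1)|)) := by
      apply Real.exp_le_exp.mpr
      have := hlogb 1 (by norm_num)
      nlinarith
    rw [hrw2]
    calc |φ'' 1| * Real.exp (-(k₃ * ((1 - (l:ℝ)) * Real.log 2)))
        ≤ |φ'' 1| * Real.exp (-(k₃ * |Real.log ((2:ℝ) ^ (-l) * 1)|)) :=
          mul_le_mul_of_nonneg_left hmono (abs_nonneg _)
      _ ≤ |φ'' ((2:ℝ) ^ (-l) * 1)| := hB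
      _ ≤ _ := hle
  · exact Real.sSup_le hub (le_trans (abs_nonneg _)
      (hub _ ⟨1, by norm_num, rfl⟩))
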